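/- Let C_{k₁},…,C_{k₂} ∈ ℝ with C_{k₁} ≠ 0 and 1 ≤ k₁ < k₂, and let W be a nonconstant homogeneous polynomial on ℝ^d. Then a polynomial Q satisfies (Σ_{k=k₁}^{k₂} C_k W(−iD)^k) Q = 0 if and only if W(−iD)^{k₁} Q = 0. In particular, the polynomial null-space of Σ_k C_k W(−iD)^k coincides with that of the lowest-order operator W(−iD)^{k₁} and is affinely invariant. -/

import Mathlib

open MvPolynomial

/-- The differential operator `D^α = ∂^{α₁}_1 ⋯ ∂^{α_d}_d` on polynomials. -/
noncomputable def Dmulti {d : ℕ} (α : Fin d →₀ ℕ) :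
    Module.End ℂ (MvPolynomial (Fin d) ℂ) :=
  (List.ofFn fun j : Fin d => ((pderiv j :
    Derivation ℂ (MvPolynomial (Fin d) ℂ) (MvPolynomial (Fin d) ℂ)).toLinearMap) ^ (α j)).prod

/-- `P(−iD) Q`: the constant-coefficient differential operator with symbol `P`
applied to the polynomial `Q`. -/
noncomputable def applyOp {d : ℕ} (P Q : MvPolynomial (Fin d) ℂ) : MvPolynomial (Fin d) ℂ :=
  (AddMonoidAlgebra.coeff P).sum fun α c => (c * (-Complex.I) ^ (α.sum fun _ n => n)) • (Dmulti α Q)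

/-- The shifted polynomial `x ↦ Q(x + h)` for a real shift `h ∈ ℝ^d`. -/
noncomputable def shiftPoly {d : ℕ} (Q : MvPolynomial (Fin d) ℂ) (h : Fin d → ℝ) :
    MvPolynomial (Fin d) ℂ :=
  aeval (fun j => X j + C ((h j : ℂ))) Q

/-- The scaled polynomial `x ↦ Q(λ x)` for a real scalar `λ`. -/
noncomputable def scalePoly {d : ℕ} (Q : MvPolynomial (Fin d) ℂ) (lam : ℝ) :
    MvPolynomial (Fin d) ℂ :=
  aeval (fun j => C ((lam : ℂ)) * X j) Q

namespace NS15

variable {d : ℕ}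

lemma sub_single_sum {m : Fin d →₀ ℕ} {j : Fin d} (h : m j ≠ 0) :
    ((m - Finsupp.single j 1).sum fun _ n => n) + 1 = m.sum fun _ n => n := by
  have hle : Finsupp.single j 1 ≤ m := by
    rwa [Finsupp.single_le_iff, Nat.one_le_iff_ne_zero]
  have hm : (m - Finsupp.single j 1) + Finsupp.single j 1 = m := tsub_add_cancel_of_le hle
  conv_rhs => rw [← hm]
  rw [Finsupp.sum_add_index' (fun _ => rfl) (fun _ _ _ => rfl),
    Finsupp.sum_single_index rfl]

lemma pderiv_strict (j : Fin d) (Q : MvPolynomial (Fin d) ℂ) :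
    pderiv j Q = 0 ∨ (pderiv j Q).totalDegree < Q.totalDegree := by
  by_cases h0 : Q.totalDegree = 0
  · left
    have hall := (totalDegree_eq_zero_iff _ Q).mp h0
    conv_lhs => rw [Q.as_sum, map_sum]
    refine Finset.sum_eq_zero fun m hm => ?_
    simp [pderiv_monomial, hall m hm j]
  · right
    have hle : (pderiv j Q).totalDegree ≤ Q.totalDegree - 1 := by
      conv_lhs => rw [Q.as_sum, map_sum]
      refine (totalDegree_finset_sum _ _).trans (Finset.sup_le fun m hm => ?_)
      rw [pderiv_monomial]
      by_cases hj : m j = 0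
      · simp [hj]
      · refine (totalDegree_monomial_le _ _).trans ?_
        simp only [Function.id_def]
        have h1 : ((m - Finsupp.single j 1).sum fun _ n => n) + 1 = m.sum fun _ n => n :=
          sub_single_sum hj
        have h2 : (m.sum fun _ n => n) ≤ Q.totalDegree := le_totalDegree hm
        omega
    omega

section Helpers

/-- "weakly degree-nonincreasing or zero" -/
def Wk (f : Module.End ℂ (MvPolynomial (Fin d) ℂ)) : Prop :=
  ∀ Q, f Q = 0 ∨ (f Q).totalDegree ≤ Q.totalDegree

/-- "strictly degree-decreasing or zero" -/
def St (f : Module.End ℂ (MvPolynomial (Fin d) ℂ)) : Prop :=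
  ∀ Q, f Q = 0 ∨ (f Q).totalDegree < Q.totalDegree

lemma St.wk {f : Module.End ℂ (MvPolynomial (Fin d) ℂ)} (h : St f) : Wk f :=
  fun Q => (h Q).imp id le_of_lt

lemma Wk.mul {f g : Module.End ℂ (MvPolynomial (Fin d) ℂ)} (hf : Wk f) (hg : Wk g) :
    Wk (f * g) := by
  intro Q
  rcases hg Q with h | h
  · left; simp [Module.End.mul_apply, h]
  · rcases hf (g Q) with h' | h'
    · left; simpa [Module.End.mul_apply] using h'
    · right; simpa [Module.End.mul_apply] using h'.trans h

lemma St.mul_wk {f g : Module.End ℂ (MvPolynomial (Fin d) ℂ)} (hf : St f) (hg : Wk g) :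
    St (f * g) := by
  intro Q
  rcases hg Q with h | h
  · left; simp [Module.End.mul_apply, h]
  · rcases hf (g Q) with h' | h'
    · left; simpa [Module.End.mul_apply] using h'
    · right; simpa [Module.End.mul_apply] using h'.trans_le h

lemma Wk.mul_st {f g : Module.End ℂ (MvPolynomial (Fin d) ℂ)} (hf : Wk f) (hg : St g) :
    St (f * g) := by
  intro Q
  rcases hg Q with h | h
  · left; simp [Module.End.mul_apply, h]
  · rcases hf (g Q) with h' | h'
    · left; simpa [Module.End.mul_apply] using h'
    · right; simpa [Module.End.mul_apply] using h'.trans_lt h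

lemma Wk.one : Wk (1 : Module.End ℂ (MvPolynomial (Fin d) ℂ)) := by
  intro Q; right; simp

lemma Wk.pow {f : Module.End ℂ (MvPolynomial (Fin d) ℂ)} (hf : Wk f) (n : ℕ) : Wk (f ^ n) := by
  induction n with
  | zero => simpa using Wk.one
  | succ n ih => rw [pow_succ]; exact ih.mul hf

lemma St.pow {f : Module.End ℂ (MvPolynomial (Fin d) ℂ)} (hf : St f) {n : ℕ} (hn : n ≠ 0) :
    St (f ^ n) := by
  obtain ⟨m, rfl⟩ := Nat.exists_eq_succ_of_ne_zero hn
  rw [pow_succ]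
  exact (hf.wk.pow m).mul_st hf

lemma Wk.list_prod {l : List (Module.End ℂ (MvPolynomial (Fin d) ℂ))}
    (h : ∀ f ∈ l, Wk f) : Wk l.prod := by
  induction l with
  | nil => simpa using Wk.one
  | cons f l ih =>
    rw [List.prod_cons]
    exact (h f (List.mem_cons_self)).mul (ih fun g hg => h g (List.mem_cons_of_mem f hg))

lemma St.list_prod {l : List (Module.End ℂ (MvPolynomial (Fin d) ℂ))}
    (h : ∀ f ∈ l, Wk f) (h2 : ∃ f ∈ l, St f) : St l.prod := by
  induction l with
  | nil => simp at h2
  | cons f l ih =>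
    rw [List.prod_cons]
    obtain ⟨g, hg, hSg⟩ := h2
    rcases List.mem_cons.mp hg with rfl | hgl
    · exact hSg.mul_wk (Wk.list_prod fun g hg => h g (List.mem_cons_of_mem _ hg))
    · exact (h f (List.mem_cons_self)).mul_st
        (ih (fun g hg => h g (List.mem_cons_of_mem f hg)) ⟨g, hgl, hSg⟩)

lemma pderiv_st (j : Fin d) :
    St ((pderiv j : Derivation ℂ (MvPolynomial (Fin d) ℂ)
      (MvPolynomial (Fin d) ℂ)).toLinearMap) :=
  fun Q => pderiv_strict j Q

lemma Dmulti_st {α : Fin d →₀ ℕ} (hα : α ≠ 0) : St (Dmulti α) := by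
  refine St.list_prod ?_ ?_
  · intro f hf
    obtain ⟨j, rfl⟩ := List.mem_ofFn.mp hf
    exact ((pderiv_st j).wk.pow _)
  · obtain ⟨j, hj⟩ : ∃ j, α j ≠ 0 := by
      by_contra h
      push_neg at h
      exact hα (Finsupp.ext fun j => h j)
    exact ⟨_, List.mem_ofFn.mpr ⟨j, rfl⟩, (pderiv_st j).pow hj⟩

variable {r : ℕ} {W : MvPolynomial (Fin d) ℂ}

lemma support_sum_eq (hW : W.IsHomogeneous r) {α : Fin d →₀ ℕ} (hα : α ∈ W.support) :
    (α.sum fun _ n => n) = r := by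
  have := hW (mem_support_iff.mp hα)
  rw [show (Finsupp.weight 1 : (Fin d →₀ ℕ) →+ ℕ) = Finsupp.weight (fun _ => 1) from rfl,
    ← Finsupp.degree_eq_weight_one] at this
  exact this

lemma support_ne_zero (hW : W.IsHomogeneous r) (hr : 0 < r) {α : Fin d →₀ ℕ}
    (hα : α ∈ W.support) : α ≠ 0 := by
  rintro rfl
  have := support_sum_eq hW hα
  rw [Finsupp.sum_zero_index] at this
  omega

lemma applyOp_strict (hW : W.IsHomogeneous r) (hr : 0 < r) (Q : MvPolynomial (Fin d) ℂ) :
    applyOp W Q = 0 ∨ (applyOp W Q).totalDegree < Q.totalDegree := by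
  by_cases h0 : Q.totalDegree = 0
  · left
    rw [applyOp, Finsupp.sum]
    refine Finset.sum_eq_zero fun α hα => ?_
    rcases Dmulti_st (support_ne_zero hW hr hα) Q with h | h
    · rw [h, smul_zero]
    · omega
  · right
    have hle : (applyOp W Q).totalDegree ≤ Q.totalDegree - 1 := by
      rw [applyOp, Finsupp.sum]
      refine (totalDegree_finset_sum _ _).trans (Finset.sup_le fun α hα => ?_)
      refine (totalDegree_smul_le _ _).trans ?_
      rcases Dmulti_st (support_ne_zero hW hr hα) Q with h | h
      · rw [h]; simp
      · omega
    omega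

lemma applyOp_zero' : applyOp W 0 = 0 := by
  simp [applyOp]

lemma applyOp_smul (c : ℂ) (Q : MvPolynomial (Fin d) ℂ) :
    applyOp W (c • Q) = c • applyOp W Q := by
  simp only [applyOp, Finsupp.smul_sum, map_smul, smul_comm c]

lemma iterate_strict (hW : W.IsHomogeneous r) (hr : 0 < r) {n : ℕ} (hn : n ≠ 0)
    (Q : MvPolynomial (Fin d) ℂ) :
    (fun q => applyOp W q)^[n] Q = 0 ∨
      ((fun q => applyOp W q)^[n] Q).totalDegree < Q.totalDegree := by
  induction n with
  | zero => omega
  | succ n ih =>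
    rw [Function.iterate_succ_apply']
    by_cases hn0 : n = 0
    · subst hn0; simpa using applyOp_strict hW hr Q
    · rcases ih hn0 with h | h
      · left; rw [h]; exact applyOp_zero'
      · rcases applyOp_strict hW hr ((fun q => applyOp W q)^[n] Q) with h' | h'
        · left; exact h'
        · right; exact h'.trans h

lemma iterate_zero' (n : ℕ) : (fun q => applyOp W q)^[n] (0 : MvPolynomial (Fin d) ℂ) = 0 :=
  Function.iterate_fixed applyOp_zero' n

/-- commuting a list product past a map, up to scalars -/
lemma prod_pair (l : List (Module.End ℂ (MvPolynomial (Fin d) ℂ) × ℂ))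
    (φ : MvPolynomial (Fin d) ℂ → MvPolynomial (Fin d) ℂ)
    (H : ∀ p ∈ l, ∀ q, p.1 (φ q) = p.2 • φ (p.1 q)) (q : MvPolynomial (Fin d) ℂ) :
    (l.map Prod.fst).prod (φ q) = (l.map Prod.snd).prod • φ ((l.map Prod.fst).prod q) := by
  induction l generalizing q with
  | nil => simp
  | cons p l ih =>
    simp only [List.map_cons, List.prod_cons, Module.End.mul_apply]
    rw [ih (fun p hp => H p (List.mem_cons_of_mem _ hp)) q, map_smul,
      H p (List.mem_cons_self), smul_smul]
    rw [mul_comm]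

lemma pderiv_shift (j : Fin d) (h : Fin d → ℝ) (q : MvPolynomial (Fin d) ℂ) :
    pderiv j (shiftPoly q h) = shiftPoly (pderiv j q) h := by
  induction q using MvPolynomial.induction_on with
  | C a => simp [shiftPoly]
  | add p q hp hq => simp [shiftPoly, map_add] at hp hq ⊢; rw [hp, hq]
  | mul_X p i hp =>
    simp only [shiftPoly] at hp ⊢
    rcases eq_or_ne j i with rfl | hij
    · have h1 : (pderiv j) ((X j + C ((h j : ℂ)) : MvPolynomial (Fin d) ℂ)) = 1 := by simp
      rw [map_mul, aeval_X, pderiv_mul, hp, h1, mul_one, pderiv_mul, pderiv_X_self, mul_one,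
        map_add, map_mul, aeval_X]
    · have h1 : (pderiv j) ((X i + C ((h i : ℂ)) : MvPolynomial (Fin d) ℂ)) = 0 := by
        simp [pderiv_X_of_ne (Ne.symm hij)]
      rw [map_mul, aeval_X, pderiv_mul, hp, h1, mul_zero, add_zero, pderiv_mul,
        pderiv_X_of_ne (Ne.symm hij), mul_zero, add_zero, map_mul, aeval_X]

lemma pderiv_scale (j : Fin d) (lam : ℝ) (q : MvPolynomial (Fin d) ℂ) :
    pderiv j (scalePoly q lam) = (lam : ℂ) • scalePoly (pderiv j q) lam := by
  induction q using MvPolynomial.induction_on with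
  | C a => simp [scalePoly]
  | add p q hp hq => simp [scalePoly, map_add] at hp hq ⊢; rw [hp, hq]
  | mul_X p i hp =>
    simp only [scalePoly, smul_eq_C_mul] at hp ⊢
    rcases eq_or_ne j i with rfl | hij
    · have h1 : (pderiv j) ((C ((lam : ℂ)) * X j : MvPolynomial (Fin d) ℂ)) = C ((lam : ℂ)) := by
        simp [pderiv_C_mul]
      rw [map_mul, aeval_X, pderiv_mul, hp, h1, pderiv_mul, pderiv_X_self, mul_one,
        map_add, map_mul, aeval_X]
      ring
    · have h1 : (pderiv j) ((C ((lam : ℂ)) * X i : MvPolynomial (Fin d) ℂ)) = 0 := by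
        simp [pderiv_C_mul, pderiv_X_of_ne (Ne.symm hij)]
      rw [map_mul, aeval_X, pderiv_mul, hp, h1, mul_zero, add_zero, pderiv_mul,
        pderiv_X_of_ne (Ne.symm hij), mul_zero, add_zero, map_mul, aeval_X]
      ring

lemma pderivL_shift (j : Fin d) (h : Fin d → ℝ) (q : MvPolynomial (Fin d) ℂ) :
    ((pderiv j : Derivation ℂ (MvPolynomial (Fin d) ℂ)
      (MvPolynomial (Fin d) ℂ)).toLinearMap) (shiftPoly q h) = shiftPoly (pderiv j q) h :=
  pderiv_shift j h q

lemma pderivL_scale (j : Fin d) (lam : ℝ) (q : MvPolynomial (Fin d) ℂ) :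
    ((pderiv j : Derivation ℂ (MvPolynomial (Fin d) ℂ)
      (MvPolynomial (Fin d) ℂ)).toLinearMap) (scalePoly q lam) =
      (lam : ℂ) • scalePoly (pderiv j q) lam :=
  pderiv_scale j lam q

lemma Dmulti_shift (α : Fin d →₀ ℕ) (h : Fin d → ℝ) (q : MvPolynomial (Fin d) ℂ) :
    Dmulti α (shiftPoly q h) = shiftPoly (Dmulti α q) h := by
  have := prod_pair (List.ofFn fun j : Fin d =>
      (((pderiv j : Derivation ℂ (MvPolynomial (Fin d) ℂ)
        (MvPolynomial (Fin d) ℂ)).toLinearMap) ^ (α j), (1 : ℂ)))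
    (fun q => shiftPoly q h) ?_ q
  · simpa [Dmulti, List.map_ofFn, Function.comp_def, List.prod_ofFn] using this
  · intro p hp s
    obtain ⟨j, rfl⟩ := List.mem_ofFn.mp hp
    simp only [one_smul]
    generalize α j = n
    induction n generalizing s with
    | zero => simp
    | succ n ih =>
      rw [pow_succ, Module.End.mul_apply, Module.End.mul_apply, pderivL_shift, ih]
      rfl

lemma Dmulti_scale (α : Fin d →₀ ℕ) (lam : ℝ) (q : MvPolynomial (Fin d) ℂ) :
    Dmulti α (scalePoly q lam) =
      ((lam : ℂ) ^ (α.sum fun _ n => n)) • scalePoly (Dmulti α q) lam := by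
  have := prod_pair (List.ofFn fun j : Fin d =>
      (((pderiv j : Derivation ℂ (MvPolynomial (Fin d) ℂ)
        (MvPolynomial (Fin d) ℂ)).toLinearMap) ^ (α j), ((lam : ℂ) ^ (α j))))
    (fun q => scalePoly q lam) ?_ q
  · have hsum : (α.sum fun _ n => n) = ∑ j, α j := Finsupp.sum_fintype _ _ fun _ => rfl
    simpa [Dmulti, List.map_ofFn, Function.comp_def, List.prod_ofFn,
      Finset.prod_pow_eq_pow_sum, hsum] using this
  · intro p hp s
    obtain ⟨j, rfl⟩ := List.mem_ofFn.mp hp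
    simp only
    generalize α j = n
    induction n generalizing s with
    | zero => simp
    | succ n ih =>
      rw [pow_succ, Module.End.mul_apply, Module.End.mul_apply, pderivL_scale, map_smul, ih,
        smul_smul, pow_succ, mul_comm]
      rfl

lemma shiftPoly_smul (c : ℂ) (q : MvPolynomial (Fin d) ℂ) (h : Fin d → ℝ) :
    shiftPoly (c • q) h = c • shiftPoly q h := by
  simp [shiftPoly, smul_eq_C_mul, map_mul]

lemma scalePoly_smul (c : ℂ) (q : MvPolynomial (Fin d) ℂ) (lam : ℝ) :
    scalePoly (c • q) lam = c • scalePoly q lam := by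
  simp [scalePoly, smul_eq_C_mul, map_mul]

lemma applyOp_shift (h : Fin d → ℝ) (Q : MvPolynomial (Fin d) ℂ) :
    applyOp W (shiftPoly Q h) = shiftPoly (applyOp W Q) h := by
  rw [applyOp, applyOp, Finsupp.sum, Finsupp.sum]
  conv_rhs => rw [shiftPoly, map_sum]
  refine Finset.sum_congr rfl fun α hα => ?_
  rw [Dmulti_shift, ← shiftPoly_smul]
  rfl

lemma applyOp_scale (hW : W.IsHomogeneous r) (lam : ℝ) (Q : MvPolynomial (Fin d) ℂ) :
    applyOp W (scalePoly Q lam) = ((lam : ℂ) ^ r) • scalePoly (applyOp W Q) lam := by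
  rw [applyOp, applyOp, Finsupp.sum, Finsupp.sum]
  conv_rhs => rw [scalePoly, map_sum, Finset.smul_sum]
  refine Finset.sum_congr rfl fun α hα => ?_
  rw [Dmulti_scale, support_sum_eq hW hα]
  show _ = ((lam : ℂ)) ^ r • scalePoly (_ • Dmulti α Q) lam
  rw [scalePoly_smul, smul_comm]

lemma iterate_shift (h : Fin d → ℝ) (n : ℕ) (Q : MvPolynomial (Fin d) ℂ) :
    (fun q => applyOp W q)^[n] (shiftPoly Q h) = shiftPoly ((fun q => applyOp W q)^[n] Q) h := by
  induction n with
  | zero => simp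
  | succ n ih => rw [Function.iterate_succ_apply', Function.iterate_succ_apply', ih, applyOp_shift]

lemma iterate_scale (hW : W.IsHomogeneous r) (lam : ℝ) (n : ℕ) (Q : MvPolynomial (Fin d) ℂ) :
    (fun q => applyOp W q)^[n] (scalePoly Q lam) =
      (((lam : ℂ) ^ r) ^ n) • scalePoly ((fun q => applyOp W q)^[n] Q) lam := by
  induction n with
  | zero => simp
  | succ n ih =>
    rw [Function.iterate_succ_apply', Function.iterate_succ_apply', ih, applyOp_smul,
      applyOp_scale hW, smul_smul, pow_succ, mul_comm]

end Helpers

end NS15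

theorem nullspace_of_sum_of_powers
    (d r k₁ k₂ : ℕ) (hk₁ : 1 ≤ k₁) (hk : k₁ < k₂)
    (C' : ℕ → ℝ) (hC : C' k₁ ≠ 0)
    (W : MvPolynomial (Fin d) ℂ) (hW : W.IsHomogeneous r) (hr : 0 < r) (hW0 : W ≠ 0) :
    (∀ Q : MvPolynomial (Fin d) ℂ,
      (∑ k ∈ Finset.Icc k₁ k₂, (C' k : ℂ) • (fun q => applyOp W q)^[k] Q) = 0 ↔
        (fun q => applyOp W q)^[k₁] Q = 0) ∧
    (∀ Q : MvPolynomial (Fin d) ℂ,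
      (∑ k ∈ Finset.Icc k₁ k₂, (C' k : ℂ) • (fun q => applyOp W q)^[k] Q) = 0 →
      (∀ h : Fin d → ℝ,
        (∑ k ∈ Finset.Icc k₁ k₂, (C' k : ℂ) • (fun q => applyOp W q)^[k] (shiftPoly Q h)) = 0) ∧
      (∀ lam : ℝ, lam ≠ 0 →
        (∑ k ∈ Finset.Icc k₁ k₂, (C' k : ℂ) • (fun q => applyOp W q)^[k] (scalePoly Q lam)) = 0)) := by
  have hCc : ((C' k₁ : ℂ)) ≠ 0 := Complex.ofReal_ne_zero.mpr hC
  have main : ∀ Q : MvPolynomial (Fin d) ℂ,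
      (∑ k ∈ Finset.Icc k₁ k₂, (C' k : ℂ) • (fun q => applyOp W q)^[k] Q) = 0 ↔
        (fun q => applyOp W q)^[k₁] Q = 0 := by
    intro Q
    constructor
    · intro hsum
      by_contra hP
      set P := (fun q => applyOp W q)^[k₁] Q with hPdef
      have hmem : k₁ ∈ Finset.Icc k₁ k₂ := Finset.mem_Icc.mpr ⟨le_refl _, le_of_lt hk⟩
      rw [← Finset.add_sum_erase _ _ hmem] at hsum
      obtain ⟨m, hm, hms⟩ := Finset.exists_mem_eq_sup P.support
        (MvPolynomial.support_nonempty.mpr hP) (fun m : Fin d →₀ ℕ => m.sum fun _ n => n)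
      have hdeg : P.totalDegree = m.sum fun _ n => n := hms
      have hcm : coeff m P ≠ 0 := mem_support_iff.mp hm
      have hcoe := congrArg (MvPolynomial.coeff m) hsum
      rw [coeff_add, coeff_smul, MvPolynomial.coeff_sum, coeff_zero] at hcoe
      have hrest : ∀ k ∈ (Finset.Icc k₁ k₂).erase k₁,
          MvPolynomial.coeff m ((C' k : ℂ) • (fun q => applyOp W q)^[k] Q) = 0 := by
        intro k hk'
        have hk1 : k₁ ≤ k := (Finset.mem_Icc.mp (Finset.mem_of_mem_erase hk')).1
        have hkne : k ≠ k₁ := Finset.ne_of_mem_erase hk'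
        have hiter : (fun q => applyOp W q)^[k] Q = (fun q => applyOp W q)^[k - k₁] P := by
          rw [hPdef, ← Function.iterate_add_apply, Nat.sub_add_cancel hk1]
        rw [coeff_smul, hiter]
        have hnz : k - k₁ ≠ 0 := by omega
        rcases NS15.iterate_strict hW hr hnz P with h | h
        · rw [h, coeff_zero, smul_zero]
        · have : MvPolynomial.coeff m ((fun q => applyOp W q)^[k - k₁] P) = 0 := by
            apply coeff_eq_zero_of_totalDegree_lt
            calc ((fun q => applyOp W q)^[k - k₁] P).totalDegree < P.totalDegree := h
            _ = ∑ i ∈ m.support, m i := hdeg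
          rw [this, smul_zero]
      rw [Finset.sum_eq_zero hrest, add_zero, smul_eq_mul] at hcoe
      exact hcm (by
        have := mul_eq_zero.mp hcoe
        tauto)
    · intro hP
      refine Finset.sum_eq_zero fun k hk' => ?_
      have hk1 : k₁ ≤ k := (Finset.mem_Icc.mp hk').1
      have hiter : (fun q => applyOp W q)^[k] Q
          = (fun q => applyOp W q)^[k - k₁] ((fun q => applyOp W q)^[k₁] Q) := by
        rw [← Function.iterate_add_apply, Nat.sub_add_cancel hk1]
      rw [hiter, hP, NS15.iterate_zero', smul_zero]
  refine ⟨main, fun Q hQ => ?_⟩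
  have h0 : (fun q => applyOp W q)^[k₁] Q = 0 := (main Q).mp hQ
  constructor
  · intro h
    rw [main, NS15.iterate_shift, h0]
    simp [shiftPoly]
  · intro lam _
    rw [main, NS15.iterate_scale hW, h0]
    simp [scalePoly]
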